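/- Let x ∈ (0, e^{−e}) and let G(x) = exp(w · exp(−1/w)) with w the unique element of (−1, 0) satisfying w·e^w = 1/ln x. If y satisfies G(x) ≤ y ≤ x, then AT_o(x, y) < C(y), where C(y) is the unique c ∈ (0, 1) with c = y^c. -/
import Mathlib


/-- Alternating towers: `AT 0 (x, y) = 1`, `AT n (x, y) = x ^ AT (n-1) (y, x)`. -/
noncomputable def altTower (x y : ℝ) : ℕ → ℝ
  | 0 => 1
  | n + 1 => x ^ altTower y x n

/-- `AT_o (x, y)`, the limit of the nondecreasing sequence `AT (2n+1) (x, y)`. -/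
noncomputable def ATo (x y : ℝ) : ℝ := ⨆ n : ℕ, altTower x y (2 * n + 1)

theorem stmt_12 (x y w c : ℝ) (hx : x ∈ Set.Ioo 0 (Real.exp (-Real.exp 1)))
    (hw : w ∈ Set.Ioo (-1 : ℝ) 0) (hwx : w * Real.exp w = 1 / Real.log x)
    (hy₁ : Real.exp (w * Real.exp (-1 / w)) ≤ y) (hy₂ : y ≤ x)
    (hc : c ∈ Set.Ioo (0 : ℝ) 1) (hcy : c = y ^ c) :
    ATo x y < c := by
  obtain ⟨hx0, hxe⟩ := hx
  obtain ⟨hwm1, hw0⟩ := hw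
  have hx1 : x < 1 := lt_trans hxe (by
    rw [Real.exp_lt_one_iff]
    simp [Real.exp_pos])
  have hlx : Real.log x < 0 := Real.log_neg hx0 hx1
  have hy0 : 0 < y := lt_of_lt_of_le (Real.exp_pos _) hy₁
  have hy1 : y < 1 := lt_of_le_of_lt hy₂ hx1
  obtain ⟨hc0, hc1⟩ := hc
  -- key identity: w * exp w * log x = 1
  have hlxne : Real.log x ≠ 0 := ne_of_lt hlx
  have hkey : w * Real.exp w * Real.log x = 1 := by
    rw [hwx, one_div, inv_mul_cancel₀ hlxne]
  set b : ℝ := Real.exp (1 / w) with hb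
  have hwne : w ≠ 0 := ne_of_lt hw0
  -- w * log x = exp (-w)
  have hwlx : w * Real.log x = Real.exp (-w) := by
    have h1 : Real.exp (-w) * Real.exp w = 1 := by
      rw [← Real.exp_add]; simp
    have h2 : (Real.exp w) ≠ 0 := (Real.exp_pos w).ne'
    exact mul_right_cancel₀ h2 (by linear_combination hkey - h1)
  -- log x ≤ 1/w
  have hlx_le : Real.log x ≤ 1 / w := by
    rw [le_div_iff_of_neg hw0]
    have h1 : (1:ℝ) ≤ Real.exp (-w) := Real.one_le_exp (by linarith)
    nlinarith [hwlx]
  have hbx : x ≤ b := by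
    calc x = Real.exp (Real.log x) := (Real.exp_log hx0).symm
    _ ≤ b := Real.exp_le_exp.mpr hlx_le
  -- x ^ exp w = b
  have hxew : x ^ Real.exp w = b := by
    rw [Real.rpow_def_of_pos hx0, hb]
    congr 1
    have h2 : (Real.exp w) ≠ 0 := (Real.exp_pos w).ne'
    field_simp
    linarith [hkey]
  have hb0 : 0 < b := Real.exp_pos _
  -- exp w ≤ y ^ b
  have hyb : Real.exp w ≤ y ^ b := by
    have h1 : (Real.exp (w * Real.exp (-1 / w))) ^ b ≤ y ^ b :=
      Real.rpow_le_rpow (Real.exp_pos _).le hy₁ hb0.le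
    have h2 : (Real.exp (w * Real.exp (-1 / w))) ^ b = Real.exp w := by
      rw [← Real.exp_mul]
      congr 1
      rw [hb, mul_assoc, ← Real.exp_add]
      have : -1 / w + 1 / w = 0 := by ring
      rw [this, Real.exp_zero, mul_one]
    linarith [h1, h2 ▸ h1]
  -- main bound: x ^ (y ^ b) ≤ b
  have hFb : x ^ (y ^ b) ≤ b := by
    calc x ^ (y ^ b) ≤ x ^ Real.exp w :=
          Real.rpow_le_rpow_of_exponent_ge hx0 hx1.le hyb
    _ = b := hxew
  -- b < exp w
  have hbew : b < Real.exp w := by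
    rw [hb, Real.exp_lt_exp]
    have : 1 / w < -1 := by
      rw [div_lt_iff_of_neg hw0]
      linarith
    linarith
  -- b < c
  have hbc : b < c := by
    by_contra h
    push_neg at h
    have h1 : y ^ b ≤ y ^ c := Real.rpow_le_rpow_of_exponent_ge hy0 hy1.le h
    rw [← hcy] at h1
    linarith
  -- all odd towers are ≤ b
  have key : ∀ n : ℕ, altTower x y (2 * n + 1) ≤ b := by
    intro n
    induction n with
    | zero =>
      have : altTower x y 1 = x := by
        simp [altTower]
      rw [show 2 * 0 + 1 = 1 by ring, this]
      exact hbx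
    | succ n ih =>
      have e1 : altTower x y (2 * (n + 1) + 1) = x ^ (y ^ altTower x y (2 * n + 1)) := by
        rw [show 2 * (n + 1) + 1 = (2 * n + 1) + 1 + 1 by ring]
        rfl
      rw [e1]
      calc x ^ (y ^ altTower x y (2 * n + 1)) ≤ x ^ (y ^ b) := by
            apply Real.rpow_le_rpow_of_exponent_ge hx0 hx1.le
            exact Real.rpow_le_rpow_of_exponent_ge hy0 hy1.le ih
      _ ≤ b := hFb
  have : ATo x y ≤ b := ciSup_le key
  linarith
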